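/- Let Λ be a free abelian group of rank r with basis e_1,…,e_r, let g ≥ 1 and d = (d_1,…,d_r) ∈ ℤ^r. Consider the free abelian group R on generators a_{ij} (1 ≤ i ≤ j ≤ r), c_k ∈ ℤ^n-valued symbols, and b_l (1 ≤ l ≤ r), mapping to Λ* ⊕ Bil^s(Λ) by: w(an element with coefficients a_{ij}, ζ^k ∈ ℤ^n, b_l) = ( Σ_{i≤j} a_{ij}(d_i e_j + d_j e_i) + Σ_k |ζ^k| e_k + Σ_l b_l(d_l + 1 − g)e_l , Σ_{i≤j} a_{ij}(e_i⊗e_j + e_j⊗e_i) + Σ_l b_l e_l⊗e_l ). Then an element lies in the kernel if and only if a_{ij} = 0 for i < j, b_i = −2a_{ii}, and ((2g−2)a_{ii} + |ζ^i|) = 0 for all i (interpreting the last condition as (a_{ii}, ζ^i) ∈ H_{g,n}). -/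

import Mathlib

private lemma entryM (r : ℕ) (a : Fin r → Fin r → ℤ) (b : Fin r → ℤ) (i j : Fin r) :
    ((∑ p ∈ Finset.univ.filter (fun p : Fin r × Fin r => p.1 ≤ p.2),
        a p.1 p.2 • (Matrix.single p.1 p.2 (1:ℤ) + Matrix.single p.2 p.1 (1:ℤ)))
      + (∑ l, b l • Matrix.single l l (1:ℤ))) i j
    = (if i ≤ j then a i j else 0) + (if j ≤ i then a j i else 0) + (if i = j then b i else 0) := by
  have e1 : ∀ x : Fin r × Fin r, (x.1 = i ∧ x.2 = j) ↔ x = (i, j) := by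
    intro x; rw [Prod.ext_iff]
  have e2 : ∀ x : Fin r × Fin r, (x.2 = i ∧ x.1 = j) ↔ x = (j, i) := by
    intro x; rw [Prod.ext_iff]; tauto
  have e3 : ∀ x : Fin r, (x = i ∧ x = j) ↔ (i = j ∧ x = i) := by
    intro x; constructor <;> rintro ⟨h1, h2⟩ <;> subst h1 <;> simp_all
  simp only [Matrix.add_apply, Matrix.sum_apply, Matrix.smul_apply, Matrix.single,
    Matrix.of_apply, smul_eq_mul, mul_add, mul_ite, mul_one, mul_zero, e1, e2, e3]
  rw [Finset.sum_add_distrib, Finset.sum_ite_eq', Finset.sum_ite_eq']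
  by_cases h : i = j <;> simp [h, Finset.mem_filter, ite_and, Finset.sum_ite_eq']

private lemma entryV (r n : ℕ) (g : ℤ) (d : Fin r → ℤ) (a : Fin r → Fin r → ℤ)
    (ζ : Fin r → Fin n → ℤ)
    (b : Fin r → ℤ) (hoff : ∀ i j : Fin r, i < j → a i j = 0) (k : Fin r) :
    ((∑ p ∈ Finset.univ.filter (fun p : Fin r × Fin r => p.1 ≤ p.2),
          a p.1 p.2 • (d p.1 • (Pi.single p.2 1 : Fin r → ℤ)
            + d p.2 • (Pi.single p.1 1 : Fin r → ℤ)))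
        + (∑ k, (∑ s, ζ k s) • (Pi.single k 1 : Fin r → ℤ))
        + (∑ l, (b l * (d l + 1 - g)) • (Pi.single l 1 : Fin r → ℤ))) k
    = 2 * a k k * d k + (∑ s, ζ k s) + b k * (d k + 1 - g) := by
  simp only [Pi.add_apply, Finset.sum_apply, Pi.smul_apply, smul_eq_mul, Pi.single_apply,
    mul_ite, mul_one, mul_zero, mul_add, Finset.sum_ite_eq]
  rw [Finset.sum_eq_single_of_mem (k, k) (by simp)]
  · simp; ring
  · rintro ⟨p1, p2⟩ hp hne
    simp only [Finset.mem_filter, Finset.mem_univ, true_and] at hp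
    rcases lt_or_eq_of_le hp with h | h
    · simp [hoff _ _ h]
    · subst h
      have hk : p1 ≠ k := by rintro rfl; exact hne rfl
      simp [Ne.symm hk]

/-- the kernel of the weight map `w ⊕ γ` on the free abelian group on the
tautological generators (with coefficients `a_{ij}` for `i ≤ j`, `ζ^k ∈ ℤⁿ`, `b_l`), with
values in `Λ* ⊕ Bilˢ(Λ)` written in the standard basis, consists exactly of the elements
with `a_{ij} = 0` for `i < j`, `b_i = -2a_{ii}`, and `(2g-2)a_{ii} + |ζ^i| = 0`. -/
theorem statement_18 (r n : ℕ) (g : ℤ) (hg : 1 ≤ g) (d : Fin r → ℤ)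
    (a : Fin r → Fin r → ℤ) (ζ : Fin r → Fin n → ℤ) (b : Fin r → ℤ) :
    ((∑ p ∈ Finset.univ.filter (fun p : Fin r × Fin r => p.1 ≤ p.2),
          a p.1 p.2 • (d p.1 • (Pi.single p.2 1 : Fin r → ℤ)
            + d p.2 • (Pi.single p.1 1 : Fin r → ℤ)))
        + (∑ k, (∑ s, ζ k s) • (Pi.single k 1 : Fin r → ℤ))
        + (∑ l, (b l * (d l + 1 - g)) • (Pi.single l 1 : Fin r → ℤ)) = 0
      ∧ (∑ p ∈ Finset.univ.filter (fun p : Fin r × Fin r => p.1 ≤ p.2),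
            a p.1 p.2 • (Matrix.single p.1 p.2 (1:ℤ)
              + Matrix.single p.2 p.1 (1:ℤ)))
          + (∑ l, b l • Matrix.single l l (1:ℤ)) = 0)
    ↔ ((∀ i j : Fin r, i < j → a i j = 0) ∧ (∀ i, b i = -2 * a i i)
        ∧ ∀ i, (2 * g - 2) * a i i + (∑ s, ζ i s) = 0) := by
  constructor
  · rintro ⟨h1, h2⟩
    have hm : ∀ i j : Fin r,
        (if i ≤ j then a i j else 0) + (if j ≤ i then a j i else 0)
          + (if i = j then b i else 0) = 0 := by
      intro i j
      rw [← entryM r a b i j, h2]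
      rfl
    have hoff : ∀ i j : Fin r, i < j → a i j = 0 := by
      intro i j hij
      have := hm i j
      simp [le_of_lt hij, not_le.mpr hij, ne_of_lt hij] at this
      exact this
    have hb : ∀ i, b i = -2 * a i i := by
      intro i
      have := hm i i
      simp at this
      linarith
    refine ⟨hoff, hb, fun k => ?_⟩
    have hv : (2 : ℤ) * a k k * d k + (∑ s, ζ k s) + b k * (d k + 1 - g) = 0 := by
      rw [← entryV r n g d a ζ b hoff k, h1]
      rfl
    linear_combination hv + (g - 1 - d k) * hb k
  · rintro ⟨hoff, hb, hζ⟩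
    constructor
    · funext k
      rw [Pi.zero_apply, entryV r n g d a ζ b hoff k, hb k]
      linear_combination hζ k
    · funext i j
      rw [Matrix.zero_apply, entryM r a b i j]
      rcases lt_trichotomy i j with h | h | h
      · simp [le_of_lt h, not_le.mpr h, ne_of_lt h, hoff i j h]
      · subst h
        simp [hb i]
        ring
      · simp [le_of_lt h, not_le.mpr h, (ne_of_lt h).symm, hoff j i h]
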